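/- (Core integral estimate in the proof of Theorem 2.5, the Poisson L¹–L² inequality.) For every real b with 0 < b ≤ 1, one has ∫_1^2 b^{(2/v) − 1} dv ≤ 2 · ∫_0^1 b^{u} du ≤ 2 / (1 + (1/2) · log(1/b)). -/

import Mathlib

open scoped BigOperators

lemma key_exp (c : ℝ) (hc : 0 ≤ c) : (2 - c) * Real.exp c ≤ 2 + c := by
  have hmono : Monotone (fun x : ℝ => 2 + x - (2 - x) * Real.exp x) := by
    apply monotone_of_deriv_nonneg
    · fun_prop
    · intro x
      have h1 : HasDerivAt (fun x : ℝ => (2 - x) * Real.exp x)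
          ((-1) * Real.exp x + (2 - x) * Real.exp x) x :=
        HasDerivAt.mul (by simpa using (hasDerivAt_id x).const_sub 2) (Real.hasDerivAt_exp x)
      have h2 : HasDerivAt (fun x : ℝ => 2 + x) 1 x := by
        simpa using (hasDerivAt_id x).const_add 2
      have hd : HasDerivAt (fun x : ℝ => 2 + x - (2 - x) * Real.exp x)
          (1 - (1 - x) * Real.exp x) x := by
        exact (h2.sub h1).congr_deriv (by ring)
      rw [hd.deriv]
      have h3 : (1 - x) * Real.exp x ≤ 1 := by
        have h := Real.add_one_le_exp (-x)
        have h4 := mul_le_mul_of_nonneg_right h (Real.exp_pos x).le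
        rw [Real.exp_neg, inv_mul_cancel₀ (Real.exp_pos x).ne'] at h4
        linarith
      linarith
  have h := hmono hc
  simp only [mul_zero, Real.exp_zero] at h
  nlinarith [h]

lemma part1 (b : ℝ) (hb0 : 0 < b) (hb1 : b ≤ 1) :
    (∫ v in (1 : ℝ)..2, b ^ ((2 / v) - 1 : ℝ)) ≤ 2 * ∫ u in (0 : ℝ)..1, b ^ (u : ℝ) := by
  have hg : Continuous (fun u : ℝ => b ^ (u : ℝ)) := by
    have : (fun u : ℝ => b ^ (u : ℝ)) = fun u => Real.exp (Real.log b * u) := by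
      funext u; rw [Real.rpow_def_of_pos hb0]
    rw [this]; fun_prop
  have huIcc : Set.uIcc (1:ℝ) 2 = Set.Icc 1 2 := Set.uIcc_of_le (by norm_num)
  have hder : ∀ v ∈ Set.uIcc (1:ℝ) 2,
      HasDerivAt (fun v : ℝ => 2 / v - 1) (-(2 / v ^ 2)) v := by
    intro v hv
    rw [huIcc] at hv
    have hvne : v ≠ 0 := by have := hv.1; positivity
    have h1 : HasDerivAt (fun v : ℝ => 2 / v) (-(2 / v ^ 2)) v := by
      simpa [div_eq_mul_inv, neg_mul, mul_comm] using ((hasDerivAt_inv hvne).const_mul 2)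
    simpa using h1.sub_const 1
  have hcont : ContinuousOn (fun v : ℝ => -(2 / v ^ 2)) (Set.uIcc (1:ℝ) 2) := by
    rw [huIcc]
    apply ContinuousOn.neg
    apply ContinuousOn.div continuousOn_const (by fun_prop)
    intro v hv
    have := hv.1; positivity
  have hs := intervalIntegral.integral_comp_smul_deriv hder hcont hg
  simp only [Function.comp, smul_eq_mul] at hs
  norm_num at hs
  -- hs : ∫ v in 1..2, -(2 / v ^ 2) * b ^ (2 / v - 1) = ∫ u in 1..0, b ^ u
  have hs2 : (∫ v in (1:ℝ)..2, (2 / v ^ 2) * b ^ ((2 / v) - 1 : ℝ))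
      = ∫ u in (0:ℝ)..1, b ^ (u : ℝ) := by
    have h := hs
    rw [intervalIntegral.integral_symm 0 1] at h
    linarith
  -- pointwise bound and conclude
  have hint1 : IntervalIntegrable (fun v : ℝ => b ^ ((2 / v) - 1 : ℝ))
      MeasureTheory.volume 1 2 := by
    apply ContinuousOn.intervalIntegrable
    rw [huIcc]
    apply hg.comp_continuousOn
    apply ContinuousOn.sub _ continuousOn_const
    apply ContinuousOn.div continuousOn_const (by fun_prop)
    intro v hv; have := hv.1; positivity
  have hint2 : IntervalIntegrable (fun v : ℝ => 2 * ((2 / v ^ 2) * b ^ ((2 / v) - 1 : ℝ)))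
      MeasureTheory.volume 1 2 := by
    apply ContinuousOn.intervalIntegrable
    rw [huIcc]
    apply ContinuousOn.mul continuousOn_const
    apply ContinuousOn.mul
    · apply ContinuousOn.div continuousOn_const (by fun_prop)
      intro v hv; have := hv.1; positivity
    · apply hg.comp_continuousOn
      apply ContinuousOn.sub _ continuousOn_const
      apply ContinuousOn.div continuousOn_const (by fun_prop)
      intro v hv; have := hv.1; positivity
  have hmono : (∫ v in (1:ℝ)..2, b ^ ((2 / v) - 1 : ℝ))
      ≤ ∫ v in (1:ℝ)..2, 2 * ((2 / v ^ 2) * b ^ ((2 / v) - 1 : ℝ)) := by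
    apply intervalIntegral.integral_mono_on (by norm_num) hint1 hint2
    intro v hv
    have hv1 : (1:ℝ) ≤ v := hv.1
    have hv2 : v ≤ 2 := hv.2
    have hvpos : (0:ℝ) < v := by linarith
    have hbp : (0:ℝ) < b ^ ((2 / v) - 1 : ℝ) := Real.rpow_pos_of_pos hb0 _
    have h4 : (1:ℝ) ≤ 2 * (2 / v ^ 2) := by
      rw [mul_div_assoc', le_div_iff₀ (by positivity)]
      nlinarith
    nlinarith
  calc (∫ v in (1:ℝ)..2, b ^ ((2 / v) - 1 : ℝ))
      ≤ ∫ v in (1:ℝ)..2, 2 * ((2 / v ^ 2) * b ^ ((2 / v) - 1 : ℝ)) := hmono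
    _ = 2 * ∫ v in (1:ℝ)..2, (2 / v ^ 2) * b ^ ((2 / v) - 1 : ℝ) :=
        intervalIntegral.integral_const_mul 2 _
    _ = 2 * ∫ u in (0:ℝ)..1, b ^ (u : ℝ) := by rw [hs2]

lemma part2 (b : ℝ) (hb0 : 0 < b) (hb1 : b ≤ 1) :
    2 * (∫ u in (0 : ℝ)..1, b ^ (u : ℝ)) ≤ 2 / (1 + (1 / 2) * Real.log (1 / b)) := by
  have hrw : (fun u : ℝ => b ^ (u : ℝ)) = fun u => Real.exp (Real.log b * u) := by
    funext u; rw [Real.rpow_def_of_pos hb0]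
  rw [show (1:ℝ)/b = b⁻¹ from one_div b, Real.log_inv]
  rcases eq_or_lt_of_le hb1 with h1 | h1
  · subst h1
    simp
  · set L := Real.log b with hL
    have hLneg : L < 0 := Real.log_neg hb0 h1
    have hint : (∫ u in (0 : ℝ)..1, b ^ (u : ℝ)) = (Real.exp L - 1) / L := by
      rw [hrw]
      have hF : ∀ u ∈ Set.uIcc (0:ℝ) 1, HasDerivAt (fun u => Real.exp (L * u) / L)
          (Real.exp (L * u)) u := by
        intro u _
        have : HasDerivAt (fun u : ℝ => L * u) L u := by
          simpa using (hasDerivAt_id u).const_mul L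
        have := (this.exp).div_const L
        simpa [mul_div_assoc, div_self hLneg.ne] using this
      rw [intervalIntegral.integral_eq_sub_of_hasDerivAt hF ((Real.continuous_exp.comp (continuous_const.mul continuous_id)).intervalIntegrable _ _)]
      simp
      ring
    rw [hint]
    -- with c = -L > 0, b = exp L, need 2*(exp L - 1)/L ≤ 2/(1 - L/2)
    have hden : 0 < 1 + 1/2 * -L := by linarith
    have hkey := key_exp (-L) (by linarith)
    rw [Real.exp_neg] at hkey
    have hexp : Real.exp L = b := Real.exp_log hb0
    have hb1' : Real.exp L < 1 := by rw [hexp]; exact h1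
    have hLne : L ≠ 0 := hLneg.ne
    -- (exp L - 1)/L = (1 - exp L)/(-L)
    have e1 : (Real.exp L - 1) / L = (1 - Real.exp L) / (-L) := by
      rw [div_neg, ← neg_div, neg_sub]
    rw [e1, ← mul_div_assoc, div_le_div_iff₀ (by linarith) hden]
    have hbpos := Real.exp_pos L
    have hkey2 : 2 + L ≤ (2 - L) * Real.exp L := by
      have h5 := mul_le_mul_of_nonneg_right hkey hbpos.le
      rw [mul_assoc, inv_mul_cancel₀ hbpos.ne', mul_one] at h5
      nlinarith [h5]
    nlinarith [hkey2]

/-- core integral estimate in the proof of Theorem 2.5, the Poisson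
L¹–L² inequality: for `0 < b ≤ 1`,
`∫_1^2 b^{2/v - 1} dv ≤ 2·∫_0^1 b^u du ≤ 2/(1 + (1/2)·log(1/b))`. -/
theorem stmt_8 (b : ℝ) (hb0 : 0 < b) (hb1 : b ≤ 1) :
    (∫ v in (1 : ℝ)..2, b ^ ((2 / v) - 1 : ℝ)) ≤ 2 * ∫ u in (0 : ℝ)..1, b ^ (u : ℝ) ∧
    2 * (∫ u in (0 : ℝ)..1, b ^ (u : ℝ)) ≤ 2 / (1 + (1 / 2) * Real.log (1 / b)) := by
  exact ⟨part1 b hb0 hb1, part2 b hb0 hb1⟩
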